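/- Let (π, D) be a pair of a probability row vector π ∈ ℝⁿ and an n×n real matrix D that represents the unit exponential distribution, let μ ≥ 1 and p ∈ [0,1]. Define the (n+1)-dimensional row vector π' := (p, (1−p)·π) and the (n+1)×(n+1) block matrix D' whose first row is (−μ, (μ−1)·π) and whose remaining n rows are (0, D). Then (π', D') represents the unit exponential distribution. -/

import Mathlib

open Matrix

/-- `(π, D)` represents the unit exponential distribution:
`π · exp(tD) · 𝟙 = e^{-t}` for all `t ≥ 0`. -/
def ReprUnitExp {n : ℕ} (π : Fin n → ℝ) (D : Matrix (Fin n) (Fin n) ℝ) : Prop :=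
  ∀ t : ℝ, 0 ≤ t → (π ᵥ* NormedSpace.exp (t • D)) ⬝ᵥ (fun _ => 1) = Real.exp (-t)

namespace Stmt10Aux

open NormedSpace
open scoped Nat

variable {m : ℕ}

theorem vecMul_smul_mat (x : Fin m → ℝ) (c : ℝ) (M : Matrix (Fin m) (Fin m) ℝ) :
    x ᵥ* (c • M) = c • (x ᵥ* M) := by
  ext j
  simp [Matrix.vecMul, dotProduct, Finset.mul_sum, mul_left_comm]

/-- The continuous linear functional `M ↦ (x ᵥ* M) ⬝ᵥ 𝟙`. -/
noncomputable def lv (x : Fin m → ℝ) : Matrix (Fin m) (Fin m) ℝ →L[ℝ] ℝ :=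
  LinearMap.toContinuousLinearMap
    { toFun := fun M => (x ᵥ* M) ⬝ᵥ (fun _ => (1:ℝ))
      map_add' := fun A B => by
        simp [Matrix.vecMul_add, add_dotProduct]
      map_smul' := fun c M => by
        simp [vecMul_smul_mat, smul_dotProduct] }

@[simp] theorem lv_apply (x : Fin m → ℝ) (M : Matrix (Fin m) (Fin m) ℝ) :
    lv x M = (x ᵥ* M) ⬝ᵥ (fun _ => (1:ℝ)) := rfl

/-- `F x M t = x ᵥ* exp(tM) ⬝ᵥ 𝟙`. -/
noncomputable def F (x : Fin m → ℝ) (M : Matrix (Fin m) (Fin m) ℝ) (t : ℝ) : ℝ :=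
  (x ᵥ* exp (t • M)) ⬝ᵥ (fun _ => (1:ℝ))

theorem F_hasDerivAt (x : Fin m → ℝ) (M : Matrix (Fin m) (Fin m) ℝ) (t : ℝ) :
    HasDerivAt (F x M) (F (x ᵥ* M) M t) t := by
  letI : SeminormedRing (Matrix (Fin m) (Fin m) ℝ) := Matrix.linftyOpSemiNormedRing
  letI : NormedRing (Matrix (Fin m) (Fin m) ℝ) := Matrix.linftyOpNormedRing
  letI : NormedAlgebra ℝ (Matrix (Fin m) (Fin m) ℝ) := Matrix.linftyOpNormedAlgebra
  have h := hasDerivAt_exp_smul_const' (𝕂 := ℝ) M t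
  have h3 : HasDerivAt (fun u => lv x (exp (u • M))) (lv x (M * exp (t • M))) t :=
    (lv x).hasFDerivAt.comp_hasDerivAt t h
  delta F
  simpa [Matrix.vecMul_vecMul] using h3

theorem F_continuous (x : Fin m → ℝ) (M : Matrix (Fin m) (Fin m) ℝ) :
    Continuous (F x M) :=
  continuous_iff_continuousAt.2 fun t => (F_hasDerivAt x M t).continuousAt

theorem F_zero (x : Fin m → ℝ) (M : Matrix (Fin m) (Fin m) ℝ) :
    F x M 0 = x ⬝ᵥ (fun _ => (1:ℝ)) := by
  simp [F, Matrix.vecMul_one]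

/-- Coefficient extraction: if `F x M t = e^{-t}` on `[0,∞)` then
`F (x ᵥ* M^k) M t = (-1)^k e^{-t}` on `[0,∞)`. -/
theorem F_pow (x : Fin m → ℝ) (M : Matrix (Fin m) (Fin m) ℝ)
    (h : ∀ t : ℝ, 0 ≤ t → F x M t = Real.exp (-t)) (k : ℕ) :
    ∀ t : ℝ, 0 ≤ t → F (x ᵥ* M ^ k) M t = (-1) ^ k * Real.exp (-t) := by
  induction k with
  | zero => simpa using h
  | succ k ih =>
    set y := x ᵥ* M ^ k with hy
    have hyM : x ᵥ* M ^ (k+1) = y ᵥ* M := by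
      rw [hy, Matrix.vecMul_vecMul, ← pow_succ]
    rw [hyM]
    have key : ∀ t : ℝ, 0 < t → F (y ᵥ* M) M t = (-1) ^ (k+1) * Real.exp (-t) := by
      intro t ht
      have hEq : F y M =ᶠ[nhds t] (fun s => (-1:ℝ) ^ k * Real.exp (-s)) := by
        filter_upwards [IsOpen.mem_nhds isOpen_Ioi ht] with s hs
        exact ih s (le_of_lt hs)
      have hg : HasDerivAt (fun s : ℝ => (-1:ℝ) ^ k * Real.exp (-s))
          ((-1) ^ (k+1) * Real.exp (-t)) t := by
        have h0 : HasDerivAt (fun s : ℝ => Real.exp (-s)) (-Real.exp (-t)) t := by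
          simpa [Function.comp_def] using (Real.hasDerivAt_exp (-t)).comp t (hasDerivAt_neg t)
        have h1 := h0.const_mul ((-1:ℝ) ^ k)
        have e : ((-1:ℝ) ^ (k+1) * Real.exp (-t)) = (-1:ℝ) ^ k * -Real.exp (-t) := by ring
        rw [e]
        exact h1
      have h2 : HasDerivAt (fun s : ℝ => (-1:ℝ) ^ k * Real.exp (-s))
          (F (y ᵥ* M) M t) t :=
        (F_hasDerivAt y M t).congr_of_eventuallyEq hEq.symm
      exact h2.unique hg
    intro t ht
    rcases eq_or_lt_of_le ht with rfl | ht'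
    · have c1 : Filter.Tendsto (F (y ᵥ* M) M) (nhdsWithin 0 (Set.Ioi 0))
          (nhds (F (y ᵥ* M) M 0)) :=
        ((F_continuous (y ᵥ* M) M).tendsto 0).mono_left nhdsWithin_le_nhds
      have c2 : Filter.Tendsto (fun s : ℝ => (-1:ℝ) ^ (k+1) * Real.exp (-s))
          (nhdsWithin 0 (Set.Ioi 0))
          (nhds ((-1:ℝ) ^ (k+1) * Real.exp (-(0:ℝ)))) := by
        refine Filter.Tendsto.mono_left ?_ nhdsWithin_le_nhds
        exact (Continuous.tendsto (by continuity) 0)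
      have c1' : Filter.Tendsto (fun s : ℝ => (-1:ℝ) ^ (k+1) * Real.exp (-s))
          (nhdsWithin 0 (Set.Ioi 0)) (nhds (F (y ᵥ* M) M 0)) := by
        refine c1.congr' ?_
        filter_upwards [self_mem_nhdsWithin] with s hs
        exact key s hs
      exact tendsto_nhds_unique c1' c2
    · exact key t ht'

theorem F_eq_tsum (x : Fin m → ℝ) (M : Matrix (Fin m) (Fin m) ℝ) (t : ℝ) :
    F x M t = ∑' (k : ℕ), ((k ! : ℝ)⁻¹ * t ^ k) * ((x ᵥ* M ^ k) ⬝ᵥ (fun _ => (1:ℝ))) := by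
  letI : SeminormedRing (Matrix (Fin m) (Fin m) ℝ) := Matrix.linftyOpSemiNormedRing
  letI : NormedRing (Matrix (Fin m) (Fin m) ℝ) := Matrix.linftyOpNormedRing
  letI : NormedAlgebra ℝ (Matrix (Fin m) (Fin m) ℝ) := Matrix.linftyOpNormedAlgebra
  have hexp : exp (t • M) = ∑' (k : ℕ), ((k ! : ℝ)⁻¹) • (t • M) ^ k :=
    congrFun (exp_eq_tsum (𝕂 := ℝ)) (t • M)
  have hsum : Summable fun k : ℕ => ((k ! : ℝ)⁻¹) • (t • M) ^ k :=
    expSeries_summable' (𝕂 := ℝ) (t • M)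
  have : F x M t = lv x (exp (t • M)) := rfl
  rw [this, hexp, (lv x).map_tsum hsum]
  congr 1
  ext k
  rw [smul_pow]
  simp [mul_assoc, mul_comm, mul_left_comm]

end Stmt10Aux

theorem stmt10 {n : ℕ} (π : Fin n → ℝ) (D : Matrix (Fin n) (Fin n) ℝ)
    (hπnn : ∀ i, 0 ≤ π i) (hπsum : ∑ i, π i = 1)
    (hrep : ReprUnitExp π D)
    (μ p : ℝ) (hμ : 1 ≤ μ) (hp : p ∈ Set.Icc (0 : ℝ) 1) :
    ReprUnitExp (Fin.cons p (fun i => (1 - p) * π i))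
      (Matrix.of (Fin.cons (Fin.cons (-μ) (fun j => (μ - 1) * π j))
        (fun i => Fin.cons 0 (D i)))) := by
  classical
  set π' : Fin (n+1) → ℝ := Fin.cons p (fun i => (1 - p) * π i) with hπ'
  set D' : Matrix (Fin (n+1)) (Fin (n+1)) ℝ :=
    Matrix.of (Fin.cons (Fin.cons (-μ) (fun j => (μ - 1) * π j))
      (fun i => Fin.cons 0 (D i))) with hD'
  have hrepF : ∀ t : ℝ, 0 ≤ t → Stmt10Aux.F π D t = Real.exp (-t) := hrep
  have hb : ∀ k : ℕ, (π ᵥ* D ^ k) ⬝ᵥ (fun _ => (1:ℝ)) = (-1) ^ k := by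
    intro k
    have h0 := Stmt10Aux.F_pow π D hrepF k 0 le_rfl
    rw [Stmt10Aux.F_zero] at h0
    simpa using h0
  have hb' : ∀ k : ℕ, π ⬝ᵥ (D ^ k *ᵥ (fun _ => (1:ℝ))) = (-1) ^ k := by
    intro k
    rw [Matrix.dotProduct_mulVec]
    exact hb k
  have hmul : ∀ (c : ℝ) (w : Fin n → ℝ),
      D' *ᵥ (Fin.cons c w) = Fin.cons (-μ * c + (μ - 1) * (π ⬝ᵥ w)) (D *ᵥ w) := by
    intro c w
    ext i
    refine Fin.cases ?_ (fun i => ?_) i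
    · simp [hD', Matrix.mulVec, dotProduct, Fin.sum_univ_succ, Finset.mul_sum,
        mul_assoc]
    · simp [hD', Matrix.mulVec, dotProduct, Fin.sum_univ_succ]
  have hone : (fun _ : Fin (n+1) => (1:ℝ)) = Fin.cons 1 (fun _ => 1) := by
    ext i
    refine Fin.cases ?_ (fun i => ?_) i <;> simp
  have hDk : ∀ k : ℕ, D' ^ k *ᵥ (fun _ => (1:ℝ))
      = Fin.cons ((-1:ℝ) ^ k) (D ^ k *ᵥ (fun _ => (1:ℝ))) := by
    intro k
    induction k with
    | zero => simp [Matrix.one_mulVec, hone]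
    | succ k ih =>
      rw [pow_succ', ← Matrix.mulVec_mulVec, ih, hmul, Matrix.mulVec_mulVec,
        ← pow_succ', hb' k]
      have hsc : -μ * (-1:ℝ) ^ k + (μ - 1) * (-1) ^ k = (-1) ^ (k+1) := by ring
      rw [hsc]
  have hcoef : ∀ k : ℕ, (π' ᵥ* D' ^ k) ⬝ᵥ (fun _ => (1:ℝ)) = (-1:ℝ) ^ k := by
    intro k
    rw [← Matrix.dotProduct_mulVec, hDk k]
    have hdot : π' ⬝ᵥ (Fin.cons ((-1:ℝ) ^ k) (D ^ k *ᵥ fun _ => (1:ℝ)))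
        = p * (-1) ^ k + (1 - p) * (π ⬝ᵥ (D ^ k *ᵥ fun _ => (1:ℝ))) := by
      simp [hπ', dotProduct, Fin.sum_univ_succ, Finset.mul_sum, mul_assoc]
    rw [hdot, hb' k]
    ring
  intro t ht
  show Stmt10Aux.F π' D' t = Real.exp (-t)
  rw [Stmt10Aux.F_eq_tsum]
  simp_rw [hcoef]
  rw [Real.exp_eq_exp_ℝ, NormedSpace.exp_eq_tsum (𝕂 := ℝ)]
  congr 1
  ext k
  rw [smul_eq_mul]
  ring
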